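/- Let p, q, r be primes with p > q and p > r. Let G be a finite Cpo-group of order qp and H a finite Cpo-group of order rp. Then |Cent(G)| = |Cent(H)| = p + 2 and the commutator subgroups satisfy |G'| = |H'| = p. -/

import Mathlib

/-- A group `G` is a Cpo-group if the centralizer of every non-trivial element
has prime order. -/
def IsCpoGroup (G : Type*) [Group G] : Prop :=
  ∀ x : G, x ≠ 1 → (Nat.card (Subgroup.centralizer ({x} : Set G))).Prime

/-- The number of distinct element centralizers of a group. -/
noncomputable def numCent (G : Type*) [Group G] : ℕ :=
  Set.ncard {H : Subgroup G | ∃ x : G, H = Subgroup.centralizer ({x} : Set G)}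

lemma cpo_centralizer_eq {G : Type*} [Group G] [Finite G] (hG : IsCpoGroup G)
    {x : G} (hx : x ≠ 1) :
    Subgroup.centralizer ({x} : Set G) = Subgroup.zpowers x := by
  have hle : Subgroup.zpowers x ≤ Subgroup.centralizer ({x} : Set G) := by
    rw [Subgroup.zpowers_le]
    exact Subgroup.mem_centralizer_singleton_iff.mpr rfl
  have hcard : Nat.card (Subgroup.zpowers x) ≠ 1 := by
    rw [Nat.card_zpowers]
    simpa [orderOf_eq_one_iff] using hx
  have hdvd : Nat.card (Subgroup.zpowers x) ∣
      Nat.card (Subgroup.centralizer ({x} : Set G)) :=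
    Subgroup.card_dvd_of_le hle
  rcases (hG x hx).eq_one_or_self_of_dvd _ hdvd with h | h
  · exact absurd h hcard
  · exact (Subgroup.eq_of_le_of_card_ge hle h.ge).symm

open scoped commutatorElement in
lemma cpo_key {G : Type*} [Group G] [Finite G] {p q : ℕ} (hp : p.Prime) (hq : q.Prime)
    (hpq : q < p) (hG : IsCpoGroup G) (hcard : Nat.card G = q * p) :
    numCent G = p + 2 ∧ Nat.card (commutator G) = p := by
  classical
  haveI : Fact p.Prime := ⟨hp⟩
  haveI : Fact q.Prime := ⟨hq⟩
  have hq1 : 1 < q := hq.one_lt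
  have hp1 : 1 < p := hp.one_lt
  -- every nontrivial element has order `q` or `p`
  have horder : ∀ x : G, x ≠ 1 → orderOf x = q ∨ orderOf x = p := by
    intro x hx
    have h1 : (orderOf x).Prime := by
      have := hG x hx
      rwa [cpo_centralizer_eq hG hx, Nat.card_zpowers] at this
    have h2 : orderOf x ∣ q * p := hcard ▸ orderOf_dvd_natCard x
    rcases (Nat.Prime.dvd_mul h1).mp h2 with h | h
    · exact Or.inl ((Nat.prime_dvd_prime_iff_eq h1 hq).mp h)
    · exact Or.inr ((Nat.prime_dvd_prime_iff_eq h1 hp).mp h)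
  have hff : (Nat.card G).factorization p = 1 := by
    have h1 : ¬ p ∣ q := fun h => absurd (Nat.le_of_dvd hq.pos h) (not_le.mpr hpq)
    rw [hcard, Nat.factorization_mul hq.pos.ne' hp.pos.ne', Finsupp.add_apply,
      Nat.factorization_eq_zero_of_not_dvd h1, Nat.Prime.factorization_self hp]
  obtain ⟨P⟩ : Nonempty (Sylow p G) := Sylow.nonempty
  have hPcard : Nat.card (P : Subgroup G) = p := by
    rw [P.card_eq_multiplicity, hff, pow_one]
  have hPindex : (P : Subgroup G).index = q := by
    have h := Subgroup.card_mul_index (P : Subgroup G)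
    rw [hPcard, hcard, mul_comm q p] at h
    exact Nat.eq_of_mul_eq_mul_left hp.pos h
  have hns : Nat.card (Sylow p G) = 1 := by
    have h1 : Nat.card (Sylow p G) ∣ q := hPindex ▸ Sylow.card_dvd_index P
    rcases hq.eq_one_or_self_of_dvd _ h1 with h | h
    · exact h
    · exfalso
      have h2 := card_sylow_modEq_one p G
      rw [h] at h2
      have h3 : q % p = 1 % p := h2
      rw [Nat.mod_eq_of_lt hpq, Nat.mod_eq_of_lt hp1] at h3
      omega
  haveI : Subsingleton (Sylow p G) := (Nat.card_eq_one_iff_unique.mp hns).1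
  have huniq : ∀ K : Subgroup G, Nat.card K = p → K = (P : Subgroup G) := by
    intro K hK
    have hK' : Nat.card K = p ^ (Nat.card G).factorization p := by
      rw [hff, pow_one]; exact hK
    have h : Sylow.ofCard K hK' = P := Subsingleton.elim _ _
    calc K = ((Sylow.ofCard K hK' : Sylow p G) : Subgroup G) :=
          (Sylow.coe_ofCard K hK').symm
      _ = (P : Subgroup G) := by rw [h]
  haveI hPnormal : (P : Subgroup G).Normal := by
    constructor
    intro n hn g
    have hinj : Function.Injective (MulAut.conj g).toMonoidHom :=
      (MulAut.conj g).injective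
    have hKcard : Nat.card ((P : Subgroup G).map (MulAut.conj g).toMonoidHom) = p := by
      rw [← Nat.card_congr (Subgroup.equivMapOfInjective _ _ hinj).toEquiv]
      exact hPcard
    have hmem : (MulAut.conj g).toMonoidHom n ∈
        (P : Subgroup G).map (MulAut.conj g).toMonoidHom :=
      Subgroup.mem_map_of_mem _ hn
    rw [huniq _ hKcard] at hmem
    simpa [MulAut.conj_apply] using hmem
  -- commutator subgroup
  have hQcard : Nat.card (G ⧸ (P : Subgroup G)) = q := by
    rw [← Subgroup.index_eq_card]; exact hPindex
  haveI : IsCyclic (G ⧸ (P : Subgroup G)) := isCyclic_of_prime_card hQcard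
  letI : CommGroup (G ⧸ (P : Subgroup G)) := IsCyclic.commGroup
  have hcomm_le : commutator G ≤ (P : Subgroup G) := by
    rw [commutator_def, Subgroup.commutator_le]
    intro g₁ _ g₂ _
    have h : ((⁅g₁, g₂⁆ : G) : G ⧸ (P : Subgroup G)) = 1 := by
      have := map_commutatorElement (QuotientGroup.mk' (P : Subgroup G)) g₁ g₂
      rw [QuotientGroup.mk'_apply] at this
      rw [this]
      exact commutatorElement_eq_one_iff_commute.mpr (mul_comm _ _)
    exact (QuotientGroup.eq_one_iff _).mp h
  obtain ⟨x0, hx0P, hx0⟩ : ∃ x ∈ (P : Subgroup G), x ≠ (1 : G) := by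
    rcases (P : Subgroup G).bot_or_exists_ne_one with h | h
    · rw [h, Subgroup.card_bot] at hPcard; omega
    · exact h
  have hcomm_ne : commutator G ≠ ⊥ := by
    intro hbot
    have hcent : Subgroup.centralizer ({x0} : Set G) = ⊤ := by
      rw [eq_top_iff]
      intro g _
      rw [Subgroup.mem_centralizer_singleton_iff]
      have h : ⁅g, x0⁆ ∈ commutator G := by
        rw [commutator_def]
        exact Subgroup.commutator_mem_commutator (Subgroup.mem_top g) (Subgroup.mem_top x0)
      rw [hbot, Subgroup.mem_bot, commutatorElement_eq_one_iff_commute] at h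
      exact h
    have h := hG x0 hx0
    rw [hcent, Subgroup.card_top, hcard] at h
    rcases h.eq_one_or_self_of_dvd q ⟨p, rfl⟩ with h' | h'
    · omega
    · nlinarith
  have hcommcard : Nat.card (commutator G) = p := by
    have hdvd : Nat.card (commutator G) ∣ p :=
      hPcard ▸ Subgroup.card_dvd_of_le hcomm_le
    rcases hp.eq_one_or_self_of_dvd _ hdvd with h | h
    · exact absurd (Subgroup.card_eq_one.mp h) hcomm_ne
    · exact h
  -- generators of prime-order subgroups
  have hgen : ∀ (K : Subgroup G) (r : ℕ), r.Prime → Nat.card K = r →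
      ∃ x : G, x ≠ 1 ∧ K = Subgroup.zpowers x := by
    intro K r hr hK
    rcases K.bot_or_exists_ne_one with h | ⟨x, hxK, hx⟩
    · rw [h, Subgroup.card_bot] at hK
      exact absurd hK.symm hr.ne_one
    · refine ⟨x, hx, ?_⟩
      have hle : Subgroup.zpowers x ≤ K := Subgroup.zpowers_le.mpr hxK
      have h1 : Nat.card (Subgroup.zpowers x) ∣ r := hK ▸ Subgroup.card_dvd_of_le hle
      have h2 : Nat.card (Subgroup.zpowers x) ≠ 1 := by
        rw [Nat.card_zpowers]; simpa [orderOf_eq_one_iff] using hx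
      rcases hr.eq_one_or_self_of_dvd _ h1 with h | h
      · exact absurd h h2
      · exact (Subgroup.eq_of_le_of_card_ge hle (le_of_eq (by rw [hK, h]))).symm
  have hcent1 : Subgroup.centralizer ({(1 : G)} : Set G) = ⊤ := by
    rw [eq_top_iff]
    intro g _
    rw [Subgroup.mem_centralizer_singleton_iff]
    simp
  -- description of the set of centralizers
  have hSet : {K : Subgroup G | ∃ x : G, K = Subgroup.centralizer ({x} : Set G)} =
      insert (⊤ : Subgroup G)
        (insert (P : Subgroup G) {K : Subgroup G | Nat.card K = q}) := by
    ext K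
    simp only [Set.mem_setOf_eq, Set.mem_insert_iff]
    constructor
    · rintro ⟨x, rfl⟩
      by_cases hx : x = 1
      · left; subst hx; exact hcent1
      · rw [cpo_centralizer_eq hG hx]
        rcases horder x hx with h | h
        · right; right; rw [Nat.card_zpowers]; exact h
        · right; left; exact huniq _ (by rw [Nat.card_zpowers]; exact h)
    · rintro (rfl | rfl | hK)
      · exact ⟨1, hcent1.symm⟩
      · obtain ⟨x, hx, hxe⟩ := hgen (P : Subgroup G) p hp hPcard
        exact ⟨x, by rw [cpo_centralizer_eq hG hx]; exact hxe⟩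
      · obtain ⟨x, hx, hxe⟩ := hgen K q hq hK
        exact ⟨x, by rw [cpo_centralizer_eq hG hx]; exact hxe⟩
  -- counting subgroups of order q
  letI : Fintype G := Fintype.ofFinite G
  have hBfin : {K : Subgroup G | Nat.card K = q}.Finite := Set.toFinite _
  have hcardB : {K : Subgroup G | Nat.card K = q}.ncard = p := by
    set E : Finset G := Finset.univ.filter (fun x : G => orderOf x = q) with hE
    have key1 : (Finset.univ.filter (fun x : G => ¬ orderOf x = q)).card = p := by
      have hEq : Finset.univ.filter (fun x : G => ¬ orderOf x = q) =
          Set.toFinset ((P : Subgroup G) : Set G) := by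
        ext x
        simp only [Finset.mem_filter, Finset.mem_univ, true_and, Set.mem_toFinset,
          SetLike.mem_coe]
        constructor
        · intro hx
          by_cases h1 : x = 1
          · subst h1; exact (P : Subgroup G).one_mem
          · rcases horder x h1 with h | h
            · exact absurd h hx
            · have h2 : Subgroup.zpowers x = (P : Subgroup G) :=
                huniq _ (by rw [Nat.card_zpowers]; exact h)
              rw [← h2]; exact Subgroup.mem_zpowers x
        · intro hxP h
          have hdvd : orderOf x ∣ p := hPcard ▸ Subgroup.orderOf_dvd_natCard _ hxP
          rw [h] at hdvd
          have := (Nat.prime_dvd_prime_iff_eq hq hp).mp hdvd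
          omega
      rw [hEq, Set.toFinset_card, ← Nat.card_eq_fintype_card]
      exact hPcard
    have key2 : E.card + p = q * p := by
      have h := Finset.card_filter_add_card_filter_not
        (s := (Finset.univ : Finset G)) (p := fun x : G => orderOf x = q)
      rw [key1, Finset.card_univ, ← Nat.card_eq_fintype_card, hcard] at h
      exact h
    have key3 : E.card = hBfin.toFinset.card * (q - 1) := by
      have hf : ∀ x ∈ E, Subgroup.zpowers x ∈ hBfin.toFinset := by
        intro x hx
        rw [hE, Finset.mem_filter] at hx
        rw [Set.Finite.mem_toFinset, Set.mem_setOf_eq, Nat.card_zpowers]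
        exact hx.2
      rw [Finset.card_eq_sum_card_fiberwise hf]
      have hfib : ∀ K ∈ hBfin.toFinset,
          (E.filter (fun x => Subgroup.zpowers x = K)).card = q - 1 := by
        intro K hK
        rw [Set.Finite.mem_toFinset, Set.mem_setOf_eq] at hK
        have hferase : E.filter (fun x => Subgroup.zpowers x = K) =
            (Set.toFinset (K : Set G)).erase 1 := by
          ext x
          simp only [hE, Finset.mem_filter, Finset.mem_univ, true_and, Finset.mem_erase,
            Set.mem_toFinset, SetLike.mem_coe]
          constructor
          · rintro ⟨ho, hz⟩
            refine ⟨?_, ?_⟩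
            · intro h1; rw [h1, orderOf_one] at ho; omega
            · rw [← hz]; exact Subgroup.mem_zpowers x
          · rintro ⟨hx1, hxK⟩
            have hle : Subgroup.zpowers x ≤ K := Subgroup.zpowers_le.mpr hxK
            have h1 : Nat.card (Subgroup.zpowers x) ∣ q :=
              hK ▸ Subgroup.card_dvd_of_le hle
            have h2 : Nat.card (Subgroup.zpowers x) ≠ 1 := by
              rw [Nat.card_zpowers]; simpa [orderOf_eq_one_iff] using hx1
            rcases hq.eq_one_or_self_of_dvd _ h1 with h | h
            · exact absurd h h2
            · refine ⟨by rw [← Nat.card_zpowers]; exact h, ?_⟩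
              exact Subgroup.eq_of_le_of_card_ge hle (le_of_eq (by rw [hK, h]))
        rw [hferase, Finset.card_erase_of_mem (by
          rw [Set.mem_toFinset, SetLike.mem_coe]; exact K.one_mem),
          Set.toFinset_card, ← Nat.card_eq_fintype_card]
        have hK' : Nat.card ((K : Set G) : Type _) = q := hK
        rw [hK']
      rw [Finset.sum_congr rfl hfib, Finset.sum_const, smul_eq_mul]
    have key4 : p * (q - 1) + p = q * p := by
      have h1 : q - 1 + 1 = q := Nat.succ_pred_eq_of_pos hq.pos
      calc p * (q - 1) + p = p * ((q - 1) + 1) := by rw [Nat.mul_succ]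
        _ = p * q := by rw [h1]
        _ = q * p := mul_comm p q
    have key5 : hBfin.toFinset.card * (q - 1) = p * (q - 1) := by omega
    have key6 : hBfin.toFinset.card = p :=
      Nat.eq_of_mul_eq_mul_right (by omega) key5
    rw [Set.ncard_eq_toFinset_card _ hBfin]
    exact key6
  -- final computation of numCent
  have hT1 : (⊤ : Subgroup G) ∉
      insert (P : Subgroup G) {K : Subgroup G | Nat.card K = q} := by
    simp only [Set.mem_insert_iff, Set.mem_setOf_eq]
    push_neg
    constructor
    · intro h
      rw [← h, Subgroup.card_top, hcard] at hPcard
      nlinarith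
    · rw [Subgroup.card_top, hcard]
      nlinarith
  have hT2 : (P : Subgroup G) ∉ {K : Subgroup G | Nat.card K = q} := by
    rw [Set.mem_setOf_eq, hPcard]
    omega
  refine ⟨?_, hcommcard⟩
  rw [numCent, hSet, Set.ncard_insert_of_notMem hT1 (Set.toFinite _),
    Set.ncard_insert_of_notMem hT2 (Set.toFinite _), hcardB]

theorem stmt_15 (G H : Type*) [Group G] [Finite G] [Group H] [Finite H]
    (p q r : ℕ) (hp : p.Prime) (hq : q.Prime) (hr : r.Prime)
    (hpq : q < p) (hpr : r < p)
    (hG : IsCpoGroup G) (hH : IsCpoGroup H)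
    (hGcard : Nat.card G = q * p) (hHcard : Nat.card H = r * p) :
    numCent G = p + 2 ∧ numCent H = p + 2 ∧
      Nat.card (commutator G) = p ∧ Nat.card (commutator H) = p := by
  obtain ⟨h1, h2⟩ := cpo_key hp hq hpq hG hGcard
  obtain ⟨h3, h4⟩ := cpo_key hp hr hpr hH hHcard
  exact ⟨h1, h3, h2, h4⟩
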